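/- For n independent binary attributes with favorable probabilities p_i ∈ (0,1) and conjunctive label, the attribute minimizing the weighted Gini impurity G(k) = 2·(∏_j p_j) - 2·p_k·∏_{j≠k} p_j² is exactly the attribute with the minimal favorable probability p_k. -/

import Mathlib

open Finset

/-- For `n` independent binary attributes with favorable probabilities `p i ∈ (0,1)` and
conjunctive label, attribute `k` minimizes the weighted Gini impurity
`G(k) = 2·(∏ j, p j) - 2·p k·∏_{j ≠ k} (p j)²` iff `p k` is minimal. -/
theorem gini_argmin (n : ℕ) (p : Fin n → ℝ)
    (hp : ∀ i, 0 < p i ∧ p i < 1) (k : Fin n) :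
    (∀ j, (2 * (∏ i, p i) - 2 * p k * ∏ i ∈ univ.erase k, (p i) ^ 2)
        ≤ (2 * (∏ i, p i) - 2 * p j * ∏ i ∈ univ.erase j, (p i) ^ 2))
      ↔ (∀ j, p k ≤ p j) := by
  have hpos : ∀ i, 0 < p i := fun i => (hp i).1
  have hP : 0 < ∏ i, p i := Finset.prod_pos fun i _ => hpos i
  have hQ : ∀ j : Fin n, 0 < ∏ i ∈ univ.erase j, p i :=
    fun j => Finset.prod_pos fun i _ => hpos i
  have hPQ : ∀ j : Fin n, p j * ∏ i ∈ univ.erase j, p i = ∏ i, p i :=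
    fun j => Finset.mul_prod_erase univ p (mem_univ j)
  have hA : ∀ j : Fin n, p j * ∏ i ∈ univ.erase j, (p i)^2
      = (∏ i, p i) * ∏ i ∈ univ.erase j, p i := by
    intro j
    rw [Finset.prod_pow, sq, ← mul_assoc, hPQ j]
  have key : ∀ j : Fin n,
      ((2 * (∏ i, p i) - 2 * p k * ∏ i ∈ univ.erase k, (p i) ^ 2)
        ≤ (2 * (∏ i, p i) - 2 * p j * ∏ i ∈ univ.erase j, (p i) ^ 2)) ↔ p k ≤ p j := by
    intro j
    rw [sub_le_sub_iff_left, mul_assoc, mul_assoc, hA j, hA k]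
    constructor
    · intro h
      have h2 : (∏ i ∈ univ.erase j, p i) ≤ ∏ i ∈ univ.erase k, p i := by
        have h1 := le_of_mul_le_mul_left (by linarith : 2 * ((∏ i, p i) * ∏ i ∈ univ.erase j, p i) ≤ 2 * ((∏ i, p i) * ∏ i ∈ univ.erase k, p i)) two_pos
        exact le_of_mul_le_mul_left h1 hP
      nlinarith [hPQ j, hPQ k, hQ j, hQ k, hpos j, hpos k,
        mul_le_mul_of_nonneg_left h2 (mul_pos (hpos k) (hpos j)).le]
    · intro h
      have h2 : (∏ i ∈ univ.erase j, p i) ≤ ∏ i ∈ univ.erase k, p i := by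
        nlinarith [hPQ j, hPQ k, hQ j, hQ k, hpos j, hpos k]
      nlinarith [mul_le_mul_of_nonneg_left h2 hP.le]
  exact ⟨fun h j => (key j).mp (h j), fun h j => (key j).mpr (h j)⟩
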